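/- The principal series module π(ε,ν) is reducible (i.e. admits a submodule W with 0 ≠ W ≠ V_ε) if and only if ν is an integer satisfying (−1)^ν = −ε. Equivalently, π(ε,ν) is irreducible if and only if ν ∉ ℤ_{−ε}. -/

import Mathlib

namespace SL2Deform

/-- The index set `ℤ_ε = {j : ℤ | (-1)^j = ε}`, for a sign `ε ∈ {1, -1}`
(i.e. a unit of `ℤ`). -/
abbrev idx (ε : ℤˣ) : Type := {j : ℤ // (-1 : ℤˣ) ^ j = ε}

/-- `V ε`: the complex vector space of finitely supported functions on `ℤ_ε`,
with standard basis `{v_j}`. -/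
abbrev V (ε : ℤˣ) : Type := idx ε →₀ ℂ

/-- The standard basis vector `v_j` of `V ε`, for `j ∈ ℤ_ε`. -/
noncomputable def bv (ε : ℤˣ) (j : ℤ) (h : (-1 : ℤˣ) ^ j = ε) : V ε :=
  Finsupp.single ⟨j, h⟩ 1

lemma parity_two : (-1 : ℤˣ) ^ (2 : ℤ) = 1 := by decide
lemma parity_neg_two : (-1 : ℤˣ) ^ (-2 : ℤ) = 1 := by decide
lemma parity_zero : (-1 : ℤˣ) ^ (0 : ℤ) = 1 := by decide

lemma parity_shift {ε : ℤˣ} {j : ℤ} (h : (-1 : ℤˣ) ^ j = ε) {s : ℤ}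
    (hs : (-1 : ℤˣ) ^ s = 1) : (-1 : ℤˣ) ^ (j + s) = ε := by
  rw [zpow_add, h, hs, mul_one]

/-- If `m ∈ ℤ_{-ε}` then `m + 1 ∈ ℤ_ε`. -/
lemma parity_succ {ε : ℤˣ} {m : ℤ} (h : (-1 : ℤˣ) ^ m = -ε) :
    (-1 : ℤˣ) ^ (m + 1) = ε := by
  rw [zpow_add, h, zpow_one]
  simp

/-- If `m ∈ ℤ_{-ε}` then `m - 1 ∈ ℤ_ε`. -/
lemma parity_pred {ε : ℤˣ} {m : ℤ} (h : (-1 : ℤˣ) ^ m = -ε) :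
    (-1 : ℤˣ) ^ (m - 1) = ε := by
  rw [sub_eq_add_neg, zpow_add, h, zpow_neg, zpow_one]
  simp

/-- The linear operator on `V ε` sending `v_j` to `c j • v_{j+s}`,
for an even shift `s`. -/
noncomputable def shiftOp (ε : ℤˣ) (s : ℤ) (hs : (-1 : ℤˣ) ^ s = 1) (c : ℤ → ℂ) :
    V ε →ₗ[ℂ] V ε :=
  Finsupp.lsum ℂ fun j =>
    LinearMap.toSpanSingleton ℂ (V ε)
      (Finsupp.single ⟨j.1 + s, parity_shift j.2 hs⟩ (c j.1))

/-- `H v_j = j • v_j`. -/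
noncomputable def Hop (ε : ℤˣ) : V ε →ₗ[ℂ] V ε :=
  shiftOp ε 0 parity_zero fun j => (j : ℂ)

/-- Principal series: `E v_j = ½(ν + j + 1) • v_{j+2}`. -/
noncomputable def Eop (ε : ℤˣ) (ν : ℂ) : V ε →ₗ[ℂ] V ε :=
  shiftOp ε 2 parity_two fun j => (1 / 2 : ℂ) * (ν + j + 1)

/-- Principal series: `F v_j = ½(ν - j + 1) • v_{j-2}`. -/
noncomputable def Fop (ε : ℤˣ) (ν : ℂ) : V ε →ₗ[ℂ] V ε :=
  shiftOp ε (-2) parity_neg_two fun j => (1 / 2 : ℂ) * (ν - j + 1)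

/-- `f_m(ν) = ½ |ν²-m²|^{1/2} (ν+m)/|ν+m|` for `ν ≠ -m`, and `f_m(-m) = 0`. -/
noncomputable def fm (m : ℤ) (ν : ℂ) : ℂ :=
  if ν = -(m : ℂ) then 0
  else (1 / 2 : ℂ) * (Real.sqrt (‖ν ^ 2 - (m : ℂ) ^ 2‖) : ℝ) * (ν + m) /
    (‖ν + (m : ℂ)‖ : ℝ)

/-- Deformed module: `E v_{m-1} = f_m(ν) • v_{m+1}`, i.e. `E v_j = f_{j+1}(ν) • v_{j+2}`. -/
noncomputable def PEop (ε : ℤˣ) (ν : ℂ) : V ε →ₗ[ℂ] V ε :=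
  shiftOp ε 2 parity_two fun j => fm (j + 1) ν

/-- Deformed module: `F v_{m+1} = f_{-m}(ν) • v_{m-1}`, i.e. `F v_j = f_{-(j-1)}(ν) • v_{j-2}`. -/
noncomputable def PFop (ε : ℤˣ) (ν : ℂ) : V ε →ₗ[ℂ] V ε :=
  shiftOp ε (-2) parity_neg_two fun j => fm (1 - j) ν

/-- The module `π'(ε,ν)`: `E v_{m-1} = ½(ν - |m|) • v_{m+1}`,
i.e. `E v_j = ½(ν - |j+1|) • v_{j+2}`. -/
noncomputable def E'op (ε : ℤˣ) (ν : ℂ) : V ε →ₗ[ℂ] V ε :=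
  shiftOp ε 2 parity_two fun j => (1 / 2 : ℂ) * (ν - ((|j + 1| : ℤ) : ℂ))

/-- The module `π'(ε,ν)`: `F v_{m+1} = ½(ν + |m|) • v_{m-1}`,
i.e. `F v_j = ½(ν + |j-1|) • v_{j-2}`. -/
noncomputable def F'op (ε : ℤˣ) (ν : ℂ) : V ε →ₗ[ℂ] V ε :=
  shiftOp ε (-2) parity_neg_two fun j => (1 / 2 : ℂ) * (ν + ((|j - 1| : ℤ) : ℂ))

/-- `ν ∈ ℤ_{-ε}`: `ν` is an integer with `(-1)^ν = -ε`. -/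
def inZminus (ε : ℤˣ) (ν : ℂ) : Prop :=
  ∃ n : ℤ, ν = (n : ℂ) ∧ (-1 : ℤˣ) ^ n = -ε

section ModuleNotions

variable {M : Type*} [AddCommGroup M] [Module ℂ M]
variable {N : Type*} [AddCommGroup N] [Module ℂ N]

/-- `W` is a submodule for the module with operators `A, B, C`: it is invariant
under all three operators. -/
def Invariant (A B C : M →ₗ[ℂ] M) (W : Submodule ℂ M) : Prop :=
  (∀ x ∈ W, A x ∈ W) ∧ (∀ x ∈ W, B x ∈ W) ∧ (∀ x ∈ W, C x ∈ W)

/-- The module with operators `A, B, C` is irreducible: its only submodules are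
`0` and the whole space. -/
def IsIrreducibleRep (A B C : M →ₗ[ℂ] M) : Prop :=
  ∀ W : Submodule ℂ M, Invariant A B C W → W = ⊥ ∨ W = ⊤

/-- `W` is an irreducible submodule: invariant, nonzero, and with no nonzero
proper invariant subspace. -/
def IsIrreducibleSubmodule (A B C : M →ₗ[ℂ] M) (W : Submodule ℂ M) : Prop :=
  Invariant A B C W ∧ W ≠ ⊥ ∧
    ∀ U : Submodule ℂ M, Invariant A B C U → U ≤ W → U = ⊥ ∨ U = W

/-- The module with operators `A, B, C` is completely reducible: every invariant
subspace has an invariant complement. -/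
def CompletelyReducible (A B C : M →ₗ[ℂ] M) : Prop :=
  ∀ W : Submodule ℂ M, Invariant A B C W →
    ∃ U : Submodule ℂ M, Invariant A B C U ∧ IsCompl W U

/-- The two modules (given by operator triples) are isomorphic. -/
def Intertwined (A B C : M →ₗ[ℂ] M) (A' B' C' : N →ₗ[ℂ] N) : Prop :=
  ∃ e : M ≃ₗ[ℂ] N, (∀ x, e (A x) = A' (e x)) ∧ (∀ x, e (B x) = B' (e x)) ∧
    (∀ x, e (C x) = C' (e x))

/-- An invariant Hermitian form for the module with operators `A, B, C`
(`A` playing the role of `H`, `B` of `E`, `C` of `F`): a sesquilinear form,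
conjugate-symmetric, with `⟨Hv,w⟩ = ⟨v,Hw⟩`, `⟨Ev,w⟩ + ⟨v,Fw⟩ = 0`,
`⟨Fv,w⟩ + ⟨v,Ew⟩ = 0`. -/
structure IsInvHermForm (A B C : M →ₗ[ℂ] M) (Φ : M → M → ℂ) : Prop where
  add_left : ∀ u v w, Φ (u + v) w = Φ u w + Φ v w
  smul_left : ∀ (a : ℂ) (v w : M), Φ (a • v) w = a * Φ v w
  conj_symm : ∀ v w, Φ w v = (starRingEnd ℂ) (Φ v w)
  inv_A : ∀ v w, Φ (A v) w = Φ v (A w)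
  inv_BC : ∀ v w, Φ (B v) w + Φ v (C w) = 0
  inv_CB : ∀ v w, Φ (C v) w + Φ v (B w) = 0

end ModuleNotions

/-- `span{v_j : j ≥ n}`. -/
noncomputable def spanGE (ε : ℤˣ) (n : ℤ) : Submodule ℂ (V ε) :=
  Submodule.span ℂ {x : V ε | ∃ j : idx ε, n ≤ j.1 ∧ x = Finsupp.single j 1}

/-- `span{v_j : j ≤ n}`. -/
noncomputable def spanLE (ε : ℤˣ) (n : ℤ) : Submodule ℂ (V ε) :=
  Submodule.span ℂ {x : V ε | ∃ j : idx ε, j.1 ≤ n ∧ x = Finsupp.single j 1}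

/-- `span{v_j : |j| ≤ n}`. -/
noncomputable def spanAbsLE (ε : ℤˣ) (n : ℤ) : Submodule ℂ (V ε) :=
  Submodule.span ℂ {x : V ε | ∃ j : idx ε, |j.1| ≤ n ∧ x = Finsupp.single j 1}

/-- The diagonal operator `S v_j = c j • v_j`. -/
noncomputable def diagMap (ε : ℤˣ) (c : idx ε → ℂ) : V ε →ₗ[ℂ] V ε :=
  Finsupp.lsum ℂ fun j => LinearMap.toSpanSingleton ℂ (V ε) (Finsupp.single j (c j))

lemma shiftOp_single (ε : ℤˣ) (s : ℤ) (hs : (-1 : ℤˣ) ^ s = 1) (c : ℤ → ℂ)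
    (j : ℤ) (h : (-1 : ℤˣ) ^ j = ε) (a : ℂ) :
    shiftOp ε s hs c (Finsupp.single ⟨j, h⟩ a) =
      Finsupp.single ⟨j + s, parity_shift h hs⟩ (a * c j) := by
  simp [shiftOp, LinearMap.toSpanSingleton_apply, Finsupp.smul_single]

lemma Hop_apply (ε : ℤˣ) (x : V ε) (k : idx ε) : Hop ε x k = (k.1 : ℂ) * x k := by
  induction x using Finsupp.induction_linear with
  | zero => simp
  | add f g hf hg => simp [map_add, hf, hg]; ring
  | single i a =>
    have : Hop ε (Finsupp.single i a) =
        Finsupp.single ⟨i.1 + 0, parity_shift i.2 parity_zero⟩ (a * i.1) := by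
      have := shiftOp_single ε 0 parity_zero (fun j => (j : ℂ)) i.1 i.2 a
      simpa [Hop] using this
    rw [this]
    have hii : (⟨i.1 + 0, parity_shift i.2 parity_zero⟩ : idx ε) = i := Subtype.ext (add_zero _)
    rw [hii]
    rcases eq_or_ne k i with rfl | hk
    · simp [mul_comm]
    · simp [Finsupp.single_apply_ne_zero, Finsupp.single_eq_of_ne' (Ne.symm hk)]
lemma even_of_parity_eq {a b : ℤ} (h : (-1 : ℤˣ) ^ a = (-1 : ℤˣ) ^ b) : Even (a - b) := by
  rcases Int.even_or_odd (a - b) with he | ho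
  · exact he
  · exfalso
    obtain ⟨k, hk⟩ := ho
    have h2 : (-1 : ℤˣ) ^ (a - b) = -1 := by
      rw [hk, zpow_add, zpow_one, zpow_mul]
      norm_num
    rw [sub_eq_add_neg, zpow_add, h, zpow_neg] at h2
    simp at h2

lemma neg_one_zpow_neg (m : ℤ) : (-1 : ℤˣ) ^ (-m) = (-1 : ℤˣ) ^ m := by
  rw [zpow_neg, Int.units_inv_eq_self]
lemma exists_single_mem {ε : ℤˣ} (W : Submodule ℂ (V ε))
    (hH : ∀ x ∈ W, Hop ε x ∈ W) (x : V ε) (hxW : x ∈ W) (hx0 : x ≠ 0) :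
    ∃ j : idx ε, Finsupp.single j 1 ∈ W := by
  generalize hn : x.support.card = n
  induction n using Nat.strong_induction_on generalizing x with
  | _ n ih =>
    have hne : x.support.Nonempty := Finsupp.support_nonempty_iff.mpr hx0
    have hpos : 1 ≤ n := hn ▸ Finset.card_pos.mpr hne
    rcases Nat.lt_or_ge n 2 with h2 | h2
    · have h1 : x.support.card = 1 := by omega
      obtain ⟨i, hi0, hxeq⟩ := Finsupp.card_support_eq_one.mp h1
      refine ⟨i, ?_⟩
      have hmem : (x i)⁻¹ • x ∈ W := W.smul_mem _ hxW
      have : (x i)⁻¹ • x = Finsupp.single i 1 := by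
        ext k
        rcases eq_or_ne k i with rfl | hk
        · simp [inv_mul_cancel₀ hi0]
        · have hxk : x k = 0 := by rw [hxeq]; exact Finsupp.single_eq_of_ne' (Ne.symm hk)
          simp [hxk, Finsupp.single_eq_of_ne' (Ne.symm hk)]
      rwa [this] at hmem
    · have hlt : 1 < x.support.card := hn ▸ h2
      obtain ⟨j, hj, j', hj', hjj'⟩ := Finset.one_lt_card.mp hlt
      set y := Hop ε x - (j'.1 : ℂ) • x with hy
      have hyW : y ∈ W := W.sub_mem (hH x hxW) (W.smul_mem _ hxW)
      have hyk : ∀ k : idx ε, y k = ((k.1 : ℂ) - (j'.1 : ℂ)) * x k := by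
        intro k
        simp [hy, Hop_apply]
        ring
      have hyj : y j ≠ 0 := by
        rw [hyk]
        refine mul_ne_zero ?_ (Finsupp.mem_support_iff.mp hj)
        rw [sub_ne_zero]
        exact_mod_cast fun h => hjj' (Subtype.ext (by exact_mod_cast h))
      have hy0 : y ≠ 0 := fun h => hyj (by simp [h])
      have hysub : y.support ⊆ x.support.erase j' := by
        intro k hk
        rw [Finset.mem_erase]
        have hk' := Finsupp.mem_support_iff.mp hk
        rw [hyk] at hk'
        constructor
        · rintro rfl
          simp at hk'
        · exact Finsupp.mem_support_iff.mpr fun h => hk' (by rw [h, mul_zero])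
      have hcard : y.support.card < n := by
        calc y.support.card ≤ (x.support.erase j').card := Finset.card_le_card hysub
        _ < x.support.card := Finset.card_erase_lt_of_mem hj'
        _ = n := hn
      exact ih _ hcard y hyW hy0 rfl
lemma coeffE_ne {ε : ℤˣ} {ν : ℂ} (h : ¬ inZminus ε ν) {j : ℤ}
    (hj : (-1 : ℤˣ) ^ j = ε) : ν + j + 1 ≠ 0 := by
  intro h0
  apply h
  refine ⟨-(j + 1), by push_cast; linear_combination h0, ?_⟩
  rw [neg_one_zpow_neg, zpow_add, hj, zpow_one, mul_neg_one]

lemma coeffF_ne {ε : ℤˣ} {ν : ℂ} (h : ¬ inZminus ε ν) {j : ℤ}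
    (hj : (-1 : ℤˣ) ^ j = ε) : ν - j + 1 ≠ 0 := by
  intro h0
  apply h
  refine ⟨j - 1, by push_cast; linear_combination h0, ?_⟩
  rw [sub_eq_add_neg, zpow_add, hj, neg_one_zpow_neg, zpow_one, mul_neg_one]

lemma single_mem_of_smul {ε : ℤˣ} (W : Submodule ℂ (V ε)) (i : idx ε) {c : ℂ}
    (hc : c ≠ 0) (h : Finsupp.single i c ∈ W) : Finsupp.single i 1 ∈ W := by
  have hm := W.smul_mem c⁻¹ h
  rwa [Finsupp.smul_single, smul_eq_mul, inv_mul_cancel₀ hc] at hm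

lemma reach {ε : ℤˣ} {ν : ℂ} (h : ¬ inZminus ε ν) (W : Submodule ℂ (V ε))
    (hE : ∀ x ∈ W, Eop ε ν x ∈ W) (hF : ∀ x ∈ W, Fop ε ν x ∈ W)
    {j : ℤ} {hj : (-1 : ℤˣ) ^ j = ε} (hjW : Finsupp.single ⟨j, hj⟩ 1 ∈ W) :
    ∀ k : idx ε, Finsupp.single k 1 ∈ W := by
  have Q : ∀ e : ℤ, ∀ h2 : (-1 : ℤˣ) ^ (j + 2 * e) = ε,
      Finsupp.single ⟨j + 2 * e, h2⟩ 1 ∈ W := by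
    intro e
    induction e using Int.induction_on with
    | zero =>
      intro h2
      have : (⟨j + 2 * 0, h2⟩ : idx ε) = ⟨j, hj⟩ := Subtype.ext (by ring)
      rw [this]; exact hjW
    | succ i ihp =>
      intro h2
      have h3 : (-1 : ℤˣ) ^ (j + 2 * (i : ℤ)) = ε := by
        rw [show j + 2 * (i : ℤ) = (j + 2 * ((i : ℤ) + 1)) + (-2) by ring]
        exact parity_shift h2 parity_neg_two
      have hmem := hE _ (ihp h3)
      rw [Eop, shiftOp_single] at hmem
      have hidx : (⟨j + 2 * (i : ℤ) + 2, parity_shift h3 parity_two⟩ : idx ε) =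
          ⟨j + 2 * ((i : ℤ) + 1), h2⟩ := Subtype.ext (by ring)
      rw [hidx] at hmem
      refine single_mem_of_smul W _ ?_ hmem
      intro hc
      apply coeffE_ne h h3
      push_cast at hc ⊢
      linear_combination 2 * hc
    | pred i ihn =>
      intro h2
      have h3 : (-1 : ℤˣ) ^ (j + 2 * (-(i : ℤ))) = ε := by
        rw [show j + 2 * (-(i : ℤ)) = (j + 2 * (-(i : ℤ) - 1)) + 2 by ring]
        exact parity_shift h2 parity_two
      have hmem := hF _ (ihn h3)
      rw [Fop, shiftOp_single] at hmem
      have hidx : (⟨j + 2 * (-(i : ℤ)) + (-2), parity_shift h3 parity_neg_two⟩ : idx ε) =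
          ⟨j + 2 * (-(i : ℤ) - 1), h2⟩ := Subtype.ext (by ring)
      rw [hidx] at hmem
      refine single_mem_of_smul W _ ?_ hmem
      intro hc
      apply coeffF_ne h h3
      push_cast at hc ⊢
      linear_combination 2 * hc
  intro k
  obtain ⟨e, he⟩ := even_of_parity_eq (k.2.trans hj.symm)
  have hk : k = ⟨j + 2 * e, by rw [show j + 2 * e = k.1 by omega]; exact k.2⟩ :=
    Subtype.ext (show (k : ℤ) = j + 2 * e by omega)
  rw [hk]
  exact Q e _

lemma irreducible_of_not {ε : ℤˣ} {ν : ℂ} (h : ¬ inZminus ε ν) :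
    IsIrreducibleRep (Hop ε) (Eop ε ν) (Fop ε ν) := by
  rintro W ⟨hH, hE, hF⟩
  by_cases hbot : W = ⊥
  · exact Or.inl hbot
  right
  obtain ⟨x, hxW, hx0⟩ := Submodule.exists_mem_ne_zero_of_ne_bot hbot
  obtain ⟨i, hiW⟩ := exists_single_mem W hH x hxW hx0
  have hall : ∀ k : idx ε, Finsupp.single k 1 ∈ W := by
    refine reach h W hE hF (j := i.1) (hj := i.2) ?_
    exact hiW
  rw [eq_top_iff]
  rintro z -
  induction z using Finsupp.induction_linear with
  | zero => exact W.zero_mem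
  | add f g hf hg => exact W.add_mem hf hg
  | single i a =>
    have := W.smul_mem a (hall i)
    rwa [Finsupp.smul_single, smul_eq_mul, mul_one] at this
lemma Hop_single (ε : ℤˣ) (i : idx ε) (a : ℂ) :
    Hop ε (Finsupp.single i a) = Finsupp.single i (a * i.1) := by
  have h0 := shiftOp_single ε 0 parity_zero (fun j => (j : ℂ)) i.1 i.2 a
  have hidx : (⟨i.1 + 0, parity_shift i.2 parity_zero⟩ : idx ε) = i := Subtype.ext (add_zero _)
  rw [hidx] at h0
  exact h0

lemma smul_single_one {ε : ℤˣ} (i : idx ε) (c : ℂ) :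
    Finsupp.single i c = c • Finsupp.single i 1 := by
  rw [Finsupp.smul_single, smul_eq_mul, mul_one]

lemma reducible_of_mem {ε : ℤˣ} {ν : ℂ} (h : inZminus ε ν) :
    ∃ W : Submodule ℂ (V ε),
      Invariant (Hop ε) (Eop ε ν) (Fop ε ν) W ∧ W ≠ ⊥ ∧ W ≠ ⊤ := by
  obtain ⟨n, hν, hn⟩ := h
  subst hν
  set S : Set (V ε) := {x : V ε | ∃ j : idx ε, n + 1 ≤ j.1 ∧ x = Finsupp.single j 1} with hS
  have hWdef : spanGE ε (n + 1) = Submodule.span ℂ S := rfl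
  have gen_mem : ∀ k : idx ε, n + 1 ≤ k.1 → Finsupp.single k 1 ∈ spanGE ε (n + 1) :=
    fun k hk => Submodule.subset_span ⟨k, hk, rfl⟩
  have key : ∀ A : V ε →ₗ[ℂ] V ε,
      (∀ k : idx ε, n + 1 ≤ k.1 → A (Finsupp.single k 1) ∈ spanGE ε (n + 1)) →
      ∀ x ∈ spanGE ε (n + 1), A x ∈ spanGE ε (n + 1) := by
    intro A hA x hx
    have hle : spanGE ε (n + 1) ≤ (spanGE ε (n + 1)).comap A := by
      rw [hWdef]
      apply Submodule.span_le.mpr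
      rintro x ⟨k, hk, rfl⟩
      exact hA k hk
    exact hle hx
  refine ⟨spanGE ε (n + 1), ⟨?_, ?_, ?_⟩, ?_, ?_⟩
  · -- H invariance
    apply key
    intro k hk
    rw [Hop_single, smul_single_one]
    exact Submodule.smul_mem _ _ (gen_mem k hk)
  · -- E invariance
    apply key
    intro k hk
    rw [Eop, shiftOp_single, smul_single_one]
    exact Submodule.smul_mem _ _
      (gen_mem ⟨k.1 + 2, parity_shift k.2 parity_two⟩ (show n + 1 ≤ k.1 + 2 by omega))
  · -- F invariance
    apply key
    intro k hk
    rw [Fop, shiftOp_single]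
    rcases eq_or_ne k.1 (n + 1) with heq | hne
    · have hc : (1 : ℂ) * (1 / 2 * ((n : ℂ) - (k.1 : ℂ) + 1)) = 0 := by
        rw [heq]; push_cast; ring
      rw [hc, Finsupp.single_zero]
      exact Submodule.zero_mem _
    · obtain ⟨r, hr⟩ := even_of_parity_eq (k.2.trans (parity_succ hn).symm)
      have hge : n + 1 ≤ k.1 + -2 := by omega
      rw [smul_single_one]
      exact Submodule.smul_mem _ _
        (gen_mem ⟨k.1 + -2, parity_shift k.2 parity_neg_two⟩ hge)
  · -- ≠ ⊥
    intro hbot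
    have := gen_mem ⟨n + 1, parity_succ hn⟩ le_rfl
    rw [hbot, Submodule.mem_bot] at this
    exact one_ne_zero (Finsupp.single_eq_zero.mp this)
  · -- ≠ ⊤
    intro htop
    have hsub : spanGE ε (n + 1) ≤ Finsupp.supported ℂ ℂ {i : idx ε | n + 1 ≤ i.1} := by
      rw [hWdef]
      apply Submodule.span_le.mpr
      rintro x ⟨k, hk, rfl⟩
      rw [SetLike.mem_coe, Finsupp.mem_supported, Finsupp.support_single_ne_zero _ one_ne_zero]
      simpa using hk
    have hmem : Finsupp.single (⟨n - 1, parity_pred hn⟩ : idx ε) 1 ∈ spanGE ε (n + 1) := by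
      rw [htop]; trivial
    have := hsub hmem
    rw [Finsupp.mem_supported, Finsupp.support_single_ne_zero _ one_ne_zero] at this
    have h2 := this (Finset.mem_coe.mpr (Finset.mem_singleton_self _))
    simp only [Set.mem_setOf_eq] at h2
    omega
/-- `π(ε,ν)` is reducible (has a submodule `W` with `0 ≠ W ≠ V_ε`) iff
`ν` is an integer with `(-1)^ν = -ε`; equivalently, `π(ε,ν)` is irreducible iff
`ν ∉ ℤ_{-ε}`. -/
theorem principal_series_reducible_iff (ε : ℤˣ) (ν : ℂ) :
    ((∃ W : Submodule ℂ (V ε),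
        Invariant (Hop ε) (Eop ε ν) (Fop ε ν) W ∧ W ≠ ⊥ ∧ W ≠ ⊤) ↔ inZminus ε ν) ∧
    (IsIrreducibleRep (Hop ε) (Eop ε ν) (Fop ε ν) ↔ ¬ inZminus ε ν) := by
  constructor
  · constructor
    · rintro ⟨W, hinv, hb, ht⟩
      by_contra hni
      rcases irreducible_of_not hni W hinv with h | h
      exacts [hb h, ht h]
    · exact reducible_of_mem
  · constructor
    · intro hirr hin
      obtain ⟨W, hinv, hb, ht⟩ := reducible_of_mem hin
      rcases hirr W hinv with h | h
      exacts [hb h, ht h]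
    · exact irreducible_of_not
end SL2Deform
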